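/- Let N ≥ T ≥ 500 be natural numbers, set a = √(2·log N) and b = √(2·log T − 2·log(3·2^{−3/2}·(2·log T)^{3/2})). Then (b + ei(b)/Φᶜ(b)) / (1/(√(2π)·a²) + a) ≥ √( (log T − log(3·(log T)^{3/2})) / log N ). -/

import Mathlib

open MeasureTheory

/-- The standard normal density `φ(x) = (2π)^{-1/2} exp(-x²/2)`. -/
noncomputable def stdNormalPDF (x : ℝ) : ℝ :=
  (Real.sqrt (2 * Real.pi))⁻¹ * Real.exp (-x ^ 2 / 2)

/-- The standard normal complementary CDF `Φᶜ(x) = ∫_x^∞ φ(u) du`. -/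
noncomputable def stdNormalCCDF (x : ℝ) : ℝ :=
  ∫ u in Set.Ioi x, stdNormalPDF u

/-- The standard expected improvement `ei(x) = φ(x) - x·Φᶜ(x)`. -/
noncomputable def stdEI (x : ℝ) : ℝ :=
  stdNormalPDF x - x * stdNormalCCDF x

open Set Filter Real

set_option maxHeartbeats 1000000

lemma pdf_pos (x : ℝ) : 0 < stdNormalPDF x := by
  unfold stdNormalPDF
  positivity

lemma pdf_cont : Continuous stdNormalPDF := by
  unfold stdNormalPDF
  continuity

lemma pdf_integrable : Integrable stdNormalPDF := by
  have h : Integrable (fun u : ℝ => Real.exp (-(1/2 : ℝ) * u ^ 2)) :=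
    integrable_exp_neg_mul_sq (by norm_num)
  have := h.const_mul (Real.sqrt (2 * Real.pi))⁻¹
  refine this.congr ?_
  filter_upwards with u
  unfold stdNormalPDF
  ring_nf

lemma pdf_integrableOn (x : ℝ) : IntegrableOn stdNormalPDF (Set.Ioi x) :=
  pdf_integrable.integrableOn

lemma pdf_hasDerivAt (u : ℝ) :
    HasDerivAt stdNormalPDF (-u * stdNormalPDF u) u := by
  have h1 : HasDerivAt (fun v : ℝ => -v ^ 2 / 2) (-u) u := by
    have := ((hasDerivAt_pow 2 u).neg).div_const 2
    simpa using this.congr_deriv (by ring)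
  have h2 := (h1.exp).const_mul (Real.sqrt (2 * Real.pi))⁻¹
  unfold stdNormalPDF
  refine h2.congr_deriv ?_
  ring

lemma pdf_tendsto : Tendsto stdNormalPDF atTop (nhds 0) := by
  have h1 : Tendsto (fun u : ℝ => -u ^ 2 / 2) atTop atBot := by
    apply Tendsto.atBot_div_const (by norm_num)
    exact tendsto_neg_atBot_iff.mpr (tendsto_pow_atTop (by norm_num))
  have h2 : Tendsto (fun u : ℝ => Real.exp (-u ^ 2 / 2)) atTop (nhds 0) :=
    Real.tendsto_exp_atBot.comp h1
  have := h2.const_mul (Real.sqrt (2 * Real.pi))⁻¹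
  simp only [mul_zero] at this
  exact this

lemma ccdf_pos (x : ℝ) : 0 < stdNormalCCDF x := by
  unfold stdNormalCCDF
  rw [setIntegral_pos_iff_support_of_nonneg_ae]
  · have : Function.support stdNormalPDF = Set.univ := by
      ext u; simp [Function.mem_support, (pdf_pos u).ne']
    rw [this, Set.univ_inter]
    simp [Real.volume_Ioi]
  · filter_upwards with u using (pdf_pos u).le
  · exact pdf_integrableOn x

lemma g_hasDerivAt {u : ℝ} (hu0 : u ≠ 0) :
    HasDerivAt (fun u : ℝ => stdNormalPDF u * (1/u^3 - 1/u))
      (stdNormalPDF u * (1 - 3/u^4)) u := by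
  have a1 : HasDerivAt (fun u : ℝ => (u^3)⁻¹) (-(3*u^2)/((u^3)^2)) u := by
    have := (hasDerivAt_pow 3 u).inv (pow_ne_zero 3 hu0)
    norm_num at this ⊢
    exact this
  have a2 : HasDerivAt (fun u : ℝ => u⁻¹) (-(u^2)⁻¹) u := hasDerivAt_inv hu0
  have h1 : HasDerivAt (fun u : ℝ => 1/u^3 - 1/u) (-(3*u^2)/((u^3)^2) - -(u^2)⁻¹) u := by
    simp only [one_div]
    exact a1.sub a2
  have h2 := (pdf_hasDerivAt u).mul h1
  refine h2.congr_deriv ?_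
  have h3 : (0:ℝ) < stdNormalPDF u := pdf_pos u
  field_simp
  ring

lemma key_integral {x : ℝ} (hx : 2 ≤ x) :
    ∫ u in Set.Ioi x, stdNormalPDF u * (1 - 3/u^4)
      = stdNormalPDF x * (1/x - 1/x^3) := by
  have hx0 : (0:ℝ) < x := lt_of_lt_of_le two_pos hx
  have hderiv : ∀ u ∈ Set.Ioi x, HasDerivAt (fun u : ℝ => stdNormalPDF u * (1/u^3 - 1/u))
      (stdNormalPDF u * (1 - 3/u^4)) u := fun u hu => g_hasDerivAt (hx0.trans hu).ne'
  have hcont : ContinuousWithinAt (fun u : ℝ => stdNormalPDF u * (1/u^3 - 1/u)) (Set.Ici x) x :=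
    (g_hasDerivAt hx0.ne').continuousAt.continuousWithinAt
  have hint : IntegrableOn (fun u : ℝ => stdNormalPDF u * (1 - 3/u^4)) (Set.Ioi x) := by
    apply Integrable.mono (pdf_integrableOn x)
    · apply ContinuousOn.aestronglyMeasurable _ measurableSet_Ioi
      apply pdf_cont.continuousOn.mul
      apply ContinuousOn.sub continuousOn_const
      apply ContinuousOn.div continuousOn_const (continuous_pow 4).continuousOn
      intro u hu
      exact pow_ne_zero 4 (hx0.trans hu).ne'
    · rw [ae_restrict_iff' measurableSet_Ioi]
      filter_upwards with u hu
      have hu2 : (2:ℝ) ≤ u := hx.trans (le_of_lt hu)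
      have h1 : (0:ℝ) < u^4 := by positivity
      have h2 : (0:ℝ) ≤ 3/u^4 := by positivity
      have h4 : (16:ℝ) ≤ u^4 := by nlinarith [sq_nonneg (u-2), sq_nonneg (u^2-4)]
      have h3 : 3/u^4 ≤ 1 := by rw [div_le_one h1]; linarith
      rw [Real.norm_eq_abs, Real.norm_eq_abs, abs_mul, abs_of_pos (pdf_pos u),
        abs_of_nonneg (by linarith : (0:ℝ) ≤ 1 - 3/u^4)]
      nlinarith [pdf_pos u]
  have hlim : Filter.Tendsto (fun u : ℝ => stdNormalPDF u * (1/u^3 - 1/u))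
      atTop (nhds 0) := by
    have t1 : Filter.Tendsto (fun u : ℝ => 1/u^3 - 1/u) atTop (nhds 0) := by
      have a : Filter.Tendsto (fun u : ℝ => 1/u^3) atTop (nhds 0) := by
        simpa [one_div, Function.comp_def] using
          tendsto_inv_atTop_zero.comp (tendsto_pow_atTop (by norm_num : 3 ≠ 0))
      have b : Filter.Tendsto (fun u : ℝ => 1/u) atTop (nhds 0) := by
        simpa [one_div] using tendsto_inv_atTop_zero
      simpa using a.sub b
    simpa using pdf_tendsto.mul t1
  have := integral_Ioi_of_hasDerivAt_of_tendsto hcont hderiv hint hlim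
  rw [this]
  ring

lemma tail_bound {x : ℝ} (hx : 2 ≤ x) :
    stdNormalCCDF x * (x^4 - 3) ≤ stdNormalPDF x * (x^3 - x) := by
  have hx0 : (0:ℝ) < x := lt_of_lt_of_le two_pos hx
  have hint : IntegrableOn (fun u : ℝ => stdNormalPDF u * (1 - 3/u^4)) (Set.Ioi x) := by
    apply Integrable.mono (pdf_integrableOn x)
    · apply ContinuousOn.aestronglyMeasurable _ measurableSet_Ioi
      apply pdf_cont.continuousOn.mul
      apply ContinuousOn.sub continuousOn_const
      apply ContinuousOn.div continuousOn_const (continuous_pow 4).continuousOn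
      intro u hu
      exact pow_ne_zero 4 (hx0.trans hu).ne'
    · rw [ae_restrict_iff' measurableSet_Ioi]
      filter_upwards with u hu
      have hu2 : (2:ℝ) ≤ u := hx.trans (le_of_lt hu)
      have h1 : (0:ℝ) < u^4 := by positivity
      have h4 : (16:ℝ) ≤ u^4 := by nlinarith [sq_nonneg (u-2), sq_nonneg (u^2-4)]
      have h3 : 3/u^4 ≤ 1 := by rw [div_le_one h1]; linarith
      have h2 : (0:ℝ) ≤ 3/u^4 := by positivity
      rw [Real.norm_eq_abs, Real.norm_eq_abs, abs_mul, abs_of_pos (pdf_pos u),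
        abs_of_nonneg (by linarith : (0:ℝ) ≤ 1 - 3/u^4)]
      nlinarith [pdf_pos u]
  have mono : ∫ u in Set.Ioi x, stdNormalPDF u * (1 - 3/x^4)
      ≤ ∫ u in Set.Ioi x, stdNormalPDF u * (1 - 3/u^4) := by
    apply setIntegral_mono_on ((pdf_integrableOn x).mul_const _) hint measurableSet_Ioi
    intro u hu
    have hu2 : x ≤ u := le_of_lt hu
    have h1 : (0:ℝ) < x^4 := by positivity
    have h2 : 3/u^4 ≤ 3/x^4 := by gcongr
    have := (pdf_pos u).le
    nlinarith
  rw [integral_mul_const, key_integral hx] at mono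
  have hxne : x ≠ 0 := hx0.ne'
  have e0 : (1-3/x^4)*x^4 = x^4-3 := by field_simp
  have e0' : (1/x-1/x^3)*x^4 = x^3-x := by field_simp
  calc stdNormalCCDF x * (x^4-3) = stdNormalCCDF x * (1-3/x^4) * x^4 := by
        rw [mul_assoc, e0]
    _ ≤ stdNormalPDF x * (1/x-1/x^3) * x^4 :=
        mul_le_mul_of_nonneg_right mono (by positivity)
    _ = stdNormalPDF x * (x^3-x) := by rw [mul_assoc, e0']


/-- The 'bounding the right factor' step in the proof of the paper's main theorem
(recall `ei'(x) = −Φᶜ(x)`, so `b + ei(b)/Φᶜ(b) = b − ei(b)/ei'(b)`). -/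
theorem stmt17 (N T : ℕ) (hT : 500 ≤ T) (hN : T ≤ N)
    (a b : ℝ) (ha : a = Real.sqrt (2 * Real.log N))
    (hb : b = Real.sqrt (2 * Real.log T
      - 2 * Real.log (3 * (2 : ℝ) ^ (-(3 : ℝ) / 2) * (2 * Real.log T) ^ ((3 : ℝ) / 2)))) :
    (b + stdEI b / stdNormalCCDF b) / (1 / (Real.sqrt (2 * Real.pi) * a ^ 2) + a)
      ≥ Real.sqrt ((Real.log T - Real.log (3 * (Real.log T) ^ ((3 : ℝ) / 2)))
          / Real.log N) := by
  have hT500 : (500:ℝ) ≤ T := by exact_mod_cast hT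
  have hTpos : (0:ℝ) < T := by linarith
  have hNT : (T:ℝ) ≤ N := by exact_mod_cast hN
  set L := Real.log T with hL
  set LN := Real.log N with hLN
  -- L ≥ 6
  have hL6 : (6:ℝ) ≤ L := by
    rw [hL, Real.le_log_iff_exp_le hTpos]
    have h1 : Real.exp 6 = Real.exp 1 ^ 6 := by
      rw [← Real.exp_nat_mul]; norm_num
    have h2 : Real.exp 1 ^ 6 ≤ 2.7182818286 ^ 6 :=
      pow_le_pow_left₀ (Real.exp_pos 1).le Real.exp_one_lt_d9.le 6
    have h3 : (2.7182818286:ℝ) ^ 6 ≤ 500 := by norm_num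
    linarith
  have hLpos : (0:ℝ) < L := by linarith
  have hLLN : L ≤ LN := Real.log_le_log hTpos hNT
  have hLNpos : (0:ℝ) < LN := by linarith
  -- log bounds
  have hlog2 : Real.log 2 ≤ 0.6931471808 := Real.log_two_lt_d9.le
  have hlog3 : Real.log 3 ≤ 9/8 := by
    rw [Real.log_le_iff_le_exp (by norm_num)]
    have h1 : Real.exp (9/8 : ℝ) = Real.exp 1 * Real.exp (1/8 : ℝ) := by
      rw [← Real.exp_add]; norm_num
    have h2 : (1:ℝ) + 1/8 ≤ Real.exp (1/8 : ℝ) := by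
      have := Real.add_one_le_exp (1/8 : ℝ); linarith
    have h3 : (2.7182818283:ℝ) < Real.exp 1 := Real.exp_one_gt_d9
    nlinarith [(Real.exp_pos (1/8:ℝ)).le]
  have hlogL : Real.log L ≤ L/6 - 1 + (Real.log 2 + Real.log 3) := by
    have h6 : Real.log L = Real.log (L/6) + Real.log 6 := by
      rw [← Real.log_mul (by positivity) (by norm_num)]
      norm_num
    have h7 : Real.log (L/6) ≤ L/6 - 1 :=
      Real.log_le_sub_one_of_pos (by positivity)
    have h8 : Real.log 6 = Real.log 2 + Real.log 3 := by
      rw [← Real.log_mul (by norm_num) (by norm_num)]; norm_num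
    linarith
  set M := Real.log (3 * L ^ ((3:ℝ)/2)) with hM
  have hMval : M = Real.log 3 + (3/2) * Real.log L := by
    rw [hM, Real.log_mul (by norm_num) (by positivity), Real.log_rpow hLpos]
  have hLM : 2 ≤ L - M := by rw [hMval]; linarith
  have hMnonneg : 0 ≤ M := by
    apply Real.log_nonneg
    have : (1:ℝ) ≤ L ^ ((3:ℝ)/2) := Real.one_le_rpow (by linarith) (by norm_num)
    linarith
  -- b = sqrt(2(L-M))
  have harg : 3 * (2 : ℝ) ^ (-(3 : ℝ) / 2) * (2 * L) ^ ((3 : ℝ) / 2)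
      = 3 * L ^ ((3:ℝ)/2) := by
    rw [Real.mul_rpow (by norm_num) hLpos.le]
    rw [show (-(3:ℝ)/2) = -((3:ℝ)/2) by ring, Real.rpow_neg (by norm_num)]
    have h2 : ((2:ℝ) ^ ((3:ℝ)/2)) ≠ 0 := by positivity
    field_simp
  have hbdef : b = Real.sqrt (2 * (L - M)) := by
    rw [hb, harg, ← hM]; ring_nf
  have hb2 : (2:ℝ) ≤ b := by
    have h4 : (4:ℝ) ≤ 2*(L-M) := by linarith
    have e : (2:ℝ) = Real.sqrt 4 := by
      rw [show (4:ℝ) = 2^2 by norm_num, Real.sqrt_sq (by norm_num)]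
    rw [hbdef]
    calc (2:ℝ) = Real.sqrt 4 := e
      _ ≤ Real.sqrt (2*(L-M)) := Real.sqrt_le_sqrt h4
  have hbpos : (0:ℝ) < b := by linarith
  have hba : b ≤ a := by
    rw [hbdef, ha]
    apply Real.sqrt_le_sqrt
    linarith
  have hapos : (0:ℝ) < a := by linarith
  -- RHS = b / a
  have hRHS : Real.sqrt ((L - M) / LN) = b / a := by
    rw [hbdef, ha, ← Real.sqrt_div (by linarith : (0:ℝ) ≤ 2*(L-M))]
    congr 1
    rw [mul_comm 2 (L-M), mul_comm 2 LN, mul_div_mul_right _ _ (by norm_num : (2:ℝ) ≠ 0)]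
  -- numerator = pdf/ccdf
  have hnum : b + stdEI b / stdNormalCCDF b = stdNormalPDF b / stdNormalCCDF b := by
    unfold stdEI
    field_simp [(ccdf_pos b).ne']
    ring
  rw [hnum, hRHS, ge_iff_le]
  -- abbreviations
  set s := Real.sqrt (2 * Real.pi) with hsdef
  have hs : (2.5:ℝ) ≤ s := by
    rw [hsdef, show (2.5:ℝ) = Real.sqrt 6.25 by
      rw [show (6.25:ℝ) = 2.5^2 by norm_num, Real.sqrt_sq (by norm_num)]]
    apply Real.sqrt_le_sqrt
    linarith [Real.pi_gt_d6]
  have hspos : (0:ℝ) < s := by linarith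
  set φ := stdNormalPDF b with hφdef
  set Φ := stdNormalCCDF b with hΦdef
  have hφpos : 0 < φ := pdf_pos b
  have hΦpos : 0 < Φ := ccdf_pos b
  have key : Φ * (b^4 - 3) ≤ φ * (b^3 - b) := tail_bound hb2
  have hD : 0 < 1/(s*a^2) + a := by positivity
  rw [le_div_iff₀ hD, le_div_iff₀ hΦpos]
  -- goal : b / a * (1/(s*a^2)+a) * Φ ≤ φ
  have hbsq4 : (4:ℝ) ≤ b^2 := by nlinarith [hb2, sq_nonneg (b-2)]
  have hb4 : (16:ℝ) ≤ b^4 := by nlinarith [hbsq4, sq_nonneg (b^2-4)]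
  have hb3 : (8:ℝ) ≤ b^3 := by
    nlinarith [mul_nonneg (sub_nonneg.2 hb2) (sub_nonneg.2 hbsq4), hb2, hbsq4]
  have hb43 : (0:ℝ) < b^4 - 3 := by linarith
  have hsa3 : (0:ℝ) < s * a^3 := by positivity
  have hstep : b / a * (1/(s*a^2)+a) = (b + s*b*a^3)/(s*a^3) := by
    field_simp
  rw [hstep, div_mul_eq_mul_div, div_le_iff₀ hsa3]
  -- goal : (b + s*b*a^3) * Φ ≤ φ * (s*a^3)
  have hcoef : 0 ≤ b + s*b*a^3 := by positivity
  have hΦle : Φ ≤ φ * (b^3-b) / (b^4-3) := by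
    rw [le_div_iff₀ hb43]; linarith
  have hb23 : (1:ℝ) ≤ b^2 - 3 := by linarith
  have haux : b^4 - b^2 ≤ s*a^3*(b^2-3) := by
    have h0 : (0:ℝ) ≤ b^3*(b^2-3) := mul_nonneg (by linarith) (by linarith)
    have ha0 : (0:ℝ) ≤ (s-2.5)*(b^3*(b^2-3)) := mul_nonneg (by linarith) h0
    have h1 : b^4 - b^2 ≤ s*b^3*(b^2-3) := by
      have hc : (0:ℝ) ≤ b - 2 := by linarith
      have e : 2.5*b^3*(b^2-3) - (b^4-b^2)
          = b^2*(2.5*(b-2)^3 + 14*(b-2)^2 + 18.5*(b-2) + 2) := by ring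
      have hpos : (0:ℝ) ≤ b^2*(2.5*(b-2)^3 + 14*(b-2)^2 + 18.5*(b-2) + 2) := by
        apply mul_nonneg (sq_nonneg b)
        have t3 : (0:ℝ) ≤ (b-2)^3 := pow_nonneg hc 3
        have t2 : (0:ℝ) ≤ (b-2)^2 := sq_nonneg _
        linarith
      have e2 : s*b^3*(b^2-3) - 2.5*b^3*(b^2-3) = (s-2.5)*(b^3*(b^2-3)) := by ring
      linarith
    have h2 : s*b^3*(b^2-3) ≤ s*a^3*(b^2-3) := by
      have h3 : b^3 ≤ a^3 := pow_le_pow_left₀ hbpos.le hba 3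
      have h4 : s*b^3 ≤ s*a^3 := mul_le_mul_of_nonneg_left h3 hspos.le
      exact mul_le_mul_of_nonneg_right h4 (by linarith)
    linarith
  calc (b + s*b*a^3) * Φ ≤ (b + s*b*a^3) * (φ * (b^3-b) / (b^4-3)) :=
        mul_le_mul_of_nonneg_left hΦle hcoef
    _ ≤ φ * (s*a^3) := by
        rw [mul_div_assoc', div_le_iff₀ hb43]
        have hid : φ*(s*a^3)*(b^4-3) - (b + s*b*a^3)*(φ*(b^3-b))
            = φ*((s*a^3*(b^2-3)) - (b^4-b^2)) := by ring
        have hnn : 0 ≤ φ*((s*a^3*(b^2-3)) - (b^4-b^2)) :=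
          mul_nonneg hφpos.le (by linarith)
        linarith
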